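/- Let a ≥ 0 and define g : ℝ² → ℝ by g(k) = ‖k‖⁴ − (a+2)‖k‖². Then g is concave on the closed ball of radius √((a+2)/6) centered at the origin. -/

import Mathlib

/-- For `a ≥ 0`, the function `g(k) = ‖k‖⁴ − (a+2)‖k‖²` on ℝ² is concave on the closed
ball of radius `√((a+2)/6)` about the origin. -/
theorem stmt_3 (a : ℝ) (ha : 0 ≤ a) :
    ConcaveOn ℝ (Metric.closedBall (0 : EuclideanSpace ℝ (Fin 2)) (Real.sqrt ((a + 2) / 6)))
      (fun k : EuclideanSpace ℝ (Fin 2) => ‖k‖ ^ 4 - (a + 2) * ‖k‖ ^ 2) := by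
  set r : ℝ := Real.sqrt ((a + 2) / 6) with hr
  have hr0 : 0 ≤ r := Real.sqrt_nonneg _
  have hr2 : r ^ 2 = (a + 2) / 6 := by
    rw [hr, Real.sq_sqrt (by linarith)]
  set φ : ℝ → ℝ := fun x => x ^ 4 - (a + 2) * x ^ 2 with hφ
  -- derivatives
  have hd1 : ∀ x : ℝ, HasDerivAt φ (4 * x ^ 3 - (a + 2) * (2 * x)) x := by
    intro x
    have h := ((hasDerivAt_pow 4 x).sub (((hasDerivAt_pow 2 x).const_mul (a + 2))))
    simp at h
    exact h
  have hd2 : ∀ x : ℝ, HasDerivAt (fun x : ℝ => 4 * x ^ 3 - (a + 2) * (2 * x))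
      (12 * x ^ 2 - 2 * (a + 2)) x := by
    intro x
    have h1 : HasDerivAt (fun x : ℝ => 4 * x ^ 3) (4 * (3 * x ^ 2)) x :=
      (hasDerivAt_pow 3 x).const_mul 4
    have h2 : HasDerivAt (fun x : ℝ => (a + 2) * (2 * x)) ((a + 2) * 2) x := by
      simpa using (((hasDerivAt_id x).const_mul (2 : ℝ)).const_mul (a + 2))
    have := h1.sub h2
    exact this.congr_deriv (by ring)
  have hsq : ∀ x : ℝ, x ∈ Set.Icc 0 r → x ^ 2 ≤ (a + 2) / 6 := by
    intro x hx
    calc x ^ 2 ≤ r ^ 2 := by nlinarith [hx.1, hx.2]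
    _ = (a + 2) / 6 := hr2
  have hconc : ConcaveOn ℝ (Set.Icc 0 r) φ := by
    apply concaveOn_of_hasDerivWithinAt2_nonpos (f' := fun x => 4 * x ^ 3 - (a + 2) * (2 * x))
      (f'' := fun x => 12 * x ^ 2 - 2 * (a + 2)) (convex_Icc 0 r)
    · exact (Continuous.continuousOn (by continuity))
    · exact fun x _ => (hd1 x).hasDerivWithinAt
    · exact fun x _ => (hd2 x).hasDerivWithinAt
    · intro x hx
      have hx' : x ∈ Set.Icc 0 r := interior_subset hx
      have := hsq x hx'
      nlinarith
  have hanti : AntitoneOn φ (Set.Icc 0 r) := by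
    apply antitoneOn_of_hasDerivWithinAt_nonpos (f' := fun x => 4 * x ^ 3 - (a + 2) * (2 * x))
      (convex_Icc 0 r)
    · exact (Continuous.continuousOn (by continuity))
    · exact fun x _ => (hd1 x).hasDerivWithinAt
    · intro x hx
      have hx' : x ∈ Set.Icc 0 r := interior_subset hx
      have h2 := hsq x hx'
      have hx0 : 0 ≤ x := hx'.1
      nlinarith
  refine ⟨convex_closedBall _ _, fun x hx y hy s t hs ht hst => ?_⟩
  have hxr : ‖x‖ ∈ Set.Icc 0 r := ⟨norm_nonneg _, by simpa [Metric.mem_closedBall, dist_zero_right] using hx⟩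
  have hyr : ‖y‖ ∈ Set.Icc 0 r := ⟨norm_nonneg _, by simpa [Metric.mem_closedBall, dist_zero_right] using hy⟩
  have hmix : s * ‖x‖ + t * ‖y‖ ∈ Set.Icc 0 r := by
    constructor
    · positivity
    · nlinarith [hxr.1, hxr.2, hyr.1, hyr.2]
  have hnorm : ‖s • x + t • y‖ ≤ s * ‖x‖ + t * ‖y‖ := by
    calc ‖s • x + t • y‖ ≤ ‖s • x‖ + ‖t • y‖ := norm_add_le _ _
    _ = s * ‖x‖ + t * ‖y‖ := by rw [norm_smul, norm_smul, Real.norm_of_nonneg hs, Real.norm_of_nonneg ht]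
  have hzr : ‖s • x + t • y‖ ∈ Set.Icc 0 r := ⟨norm_nonneg _, hnorm.trans hmix.2⟩
  have step1 : φ (s * ‖x‖ + t * ‖y‖) ≤ φ ‖s • x + t • y‖ := hanti hzr hmix hnorm
  have step2 : s * φ ‖x‖ + t * φ ‖y‖ ≤ φ (s * ‖x‖ + t * ‖y‖) := by
    have := hconc.2 hxr hyr hs ht hst
    simpa [smul_eq_mul] using this
  calc s • (fun k : EuclideanSpace ℝ (Fin 2) => ‖k‖ ^ 4 - (a + 2) * ‖k‖ ^ 2) x
        + t • (fun k : EuclideanSpace ℝ (Fin 2) => ‖k‖ ^ 4 - (a + 2) * ‖k‖ ^ 2) y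
      = s * φ ‖x‖ + t * φ ‖y‖ := by simp [hφ, smul_eq_mul]
    _ ≤ φ (s * ‖x‖ + t * ‖y‖) := step2
    _ ≤ φ ‖s • x + t • y‖ := step1
    _ = ‖s • x + t • y‖ ^ 4 - (a + 2) * ‖s • x + t • y‖ ^ 2 := rfl
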